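/- arXiv:2301.04863 — 2 statements merged into one kernel-verified Lean document; each statement's English description precedes it below -/
import Mathlib

section
/- If the best misfit Φ^† and the approximate misfit Φ^a both belong to L¹_{μ_θ}, then max{ d_KL(μ^a ‖ μ^†), d_KL(μ^† ‖ μ^a) } ≤ C · ‖ |O δ^†|²_{Σ_η^{−1}} ‖_{L¹_{μ_θ}}^{1/2}, where μ^† := (μ_θ)_{Φ^†}, μ^a := (μ_θ)_{Φ^a}, and C = 2^{1/2} · exp( 2‖Φ^†‖_{L¹_{μ_θ}} + 2‖Φ^a‖_{L¹_{μ_θ}} ) · ( ‖Φ^†‖_{L¹_{μ_θ}}^{1/2} + ‖Φ^a‖_{L¹_{μ_θ}}^{1/2} ). -/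
set_option maxHeartbeats 1000000


open MeasureTheory Real Matrix ENNReal

open Classical in
/-- Kullback--Leibler divergence. -/
noncomputable def KLdiv {X : Type*} [MeasurableSpace X] (μ ν : Measure X) : ℝ≥0∞ :=
  if μ ≪ ν ∧ Integrable (fun x => Real.log ((μ.rnDeriv ν x).toReal)) μ
  then ENNReal.ofReal (∫ x, Real.log ((μ.rnDeriv ν x).toReal) ∂μ)
  else ⊤

/-- The posterior measure `μ_Φ` with density `exp (-Φ) / Z` w.r.t. `μ`. -/
noncomputable def posterior {X : Type*} [MeasurableSpace X] (μ : Measure X) (Φ : X → ℝ) :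
    Measure X :=
  μ.withDensity fun x => ENNReal.ofReal (Real.exp (-Φ x) / ∫ x', Real.exp (-Φ x') ∂μ)

section Quad
variable {n : ℕ} {S : Matrix (Fin n) (Fin n) ℝ}

lemma q_nonneg (hS : S.PosSemidef) (v : Fin n → ℝ) : 0 ≤ v ⬝ᵥ (S *ᵥ v) := by
  simpa using hS.dotProduct_mulVec_nonneg v

lemma bilin_symm (hS : S.PosSemidef) (u v : Fin n → ℝ) :
    u ⬝ᵥ (S *ᵥ v) = v ⬝ᵥ (S *ᵥ u) := by
  have hsym : Sᵀ = S := by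
    have := hS.isHermitian
    simpa [Matrix.IsHermitian, Matrix.conjTranspose_eq_transpose_of_trivial] using this
  rw [Matrix.dotProduct_mulVec, ← Matrix.mulVec_transpose, hsym, dotProduct_comm]

lemma q_add_expand (hS : S.PosSemidef) (a b : Fin n → ℝ) :
    (a + b) ⬝ᵥ (S *ᵥ (a + b)) =
      a ⬝ᵥ (S *ᵥ a) + 2 * (a ⬝ᵥ (S *ᵥ b)) + b ⬝ᵥ (S *ᵥ b) := by
  rw [Matrix.mulVec_add, add_dotProduct, dotProduct_add,
    dotProduct_add, bilin_symm hS b a]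
  ring

lemma q_sub_expand (hS : S.PosSemidef) (a b : Fin n → ℝ) :
    (a - b) ⬝ᵥ (S *ᵥ (a - b)) =
      a ⬝ᵥ (S *ᵥ a) - 2 * (a ⬝ᵥ (S *ᵥ b)) + b ⬝ᵥ (S *ᵥ b) := by
  rw [Matrix.mulVec_sub, sub_dotProduct, dotProduct_sub,
    dotProduct_sub, bilin_symm hS b a]
  ring

lemma bilin_cs (hS : S.PosSemidef) (u v : Fin n → ℝ) :
    |u ⬝ᵥ (S *ᵥ v)| ≤ Real.sqrt (u ⬝ᵥ (S *ᵥ u)) * Real.sqrt (v ⬝ᵥ (S *ᵥ v)) := by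
  have hquad : ∀ t : ℝ, 0 ≤ (v ⬝ᵥ (S *ᵥ v)) * (t * t) + (2 * (u ⬝ᵥ (S *ᵥ v))) * t
      + (u ⬝ᵥ (S *ᵥ u)) := by
    intro t
    have h := q_nonneg hS (u + t • v)
    have hexp : (u + t • v) ⬝ᵥ (S *ᵥ (u + t • v)) =
        (v ⬝ᵥ (S *ᵥ v)) * (t * t) + (2 * (u ⬝ᵥ (S *ᵥ v))) * t + (u ⬝ᵥ (S *ᵥ u)) := by
      rw [Matrix.mulVec_add, Matrix.mulVec_smul, add_dotProduct,
        smul_dotProduct, dotProduct_add, dotProduct_add,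
        dotProduct_smul, dotProduct_smul, bilin_symm hS v u]
      simp only [smul_eq_mul]; ring
    rw [hexp] at h
    exact h
  have hd := discrim_le_zero hquad
  rw [discrim] at hd
  have hsq : (u ⬝ᵥ (S *ᵥ v)) ^ 2 ≤ (u ⬝ᵥ (S *ᵥ u)) * (v ⬝ᵥ (S *ᵥ v)) := by nlinarith
  calc |u ⬝ᵥ (S *ᵥ v)| = Real.sqrt ((u ⬝ᵥ (S *ᵥ v)) ^ 2) := (Real.sqrt_sq_eq_abs _).symm
    _ ≤ Real.sqrt ((u ⬝ᵥ (S *ᵥ u)) * (v ⬝ᵥ (S *ᵥ v))) := Real.sqrt_le_sqrt hsq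
    _ = _ := Real.sqrt_mul (q_nonneg hS u) _

lemma q_diff_le (hS : S.PosSemidef) (a b : Fin n → ℝ) :
    |a ⬝ᵥ (S *ᵥ a) - b ⬝ᵥ (S *ᵥ b)| ≤
      Real.sqrt ((a - b) ⬝ᵥ (S *ᵥ (a - b))) *
        (Real.sqrt (a ⬝ᵥ (S *ᵥ a)) + Real.sqrt (b ⬝ᵥ (S *ᵥ b))) := by
  have key : a ⬝ᵥ (S *ᵥ a) - b ⬝ᵥ (S *ᵥ b) = (a - b) ⬝ᵥ (S *ᵥ (a + b)) := by
    rw [Matrix.mulVec_add, sub_dotProduct, dotProduct_add,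
      dotProduct_add, bilin_symm hS b a]
    ring
  have hsum : Real.sqrt ((a + b) ⬝ᵥ (S *ᵥ (a + b))) ≤
      Real.sqrt (a ⬝ᵥ (S *ᵥ a)) + Real.sqrt (b ⬝ᵥ (S *ᵥ b)) := by
    have hq : (a + b) ⬝ᵥ (S *ᵥ (a + b)) ≤
        (Real.sqrt (a ⬝ᵥ (S *ᵥ a)) + Real.sqrt (b ⬝ᵥ (S *ᵥ b))) ^ 2 := by
      rw [q_add_expand hS]
      have hcs := bilin_cs hS a b
      have h1 := Real.sq_sqrt (q_nonneg hS a)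
      have h2 := Real.sq_sqrt (q_nonneg hS b)
      have h3 := le_abs_self (a ⬝ᵥ (S *ᵥ b))
      nlinarith [Real.sqrt_nonneg (a ⬝ᵥ (S *ᵥ a)), Real.sqrt_nonneg (b ⬝ᵥ (S *ᵥ b))]
    calc Real.sqrt ((a + b) ⬝ᵥ (S *ᵥ (a + b))) ≤
        Real.sqrt ((Real.sqrt (a ⬝ᵥ (S *ᵥ a)) + Real.sqrt (b ⬝ᵥ (S *ᵥ b))) ^ 2) :=
          Real.sqrt_le_sqrt hq
      _ = _ := Real.sqrt_sq (by positivity)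
  calc |a ⬝ᵥ (S *ᵥ a) - b ⬝ᵥ (S *ᵥ b)| = |(a - b) ⬝ᵥ (S *ᵥ (a + b))| := by rw [key]
    _ ≤ Real.sqrt ((a - b) ⬝ᵥ (S *ᵥ (a - b))) * Real.sqrt ((a + b) ⬝ᵥ (S *ᵥ (a + b))) :=
        bilin_cs hS _ _
    _ ≤ _ := mul_le_mul_of_nonneg_left hsum (Real.sqrt_nonneg _)

lemma q_sub_le_two (hS : S.PosSemidef) (a b : Fin n → ℝ) :
    (a - b) ⬝ᵥ (S *ᵥ (a - b)) ≤ 2 * (a ⬝ᵥ (S *ᵥ a)) + 2 * (b ⬝ᵥ (S *ᵥ b)) := by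
  have h := q_nonneg hS (a + b)
  rw [q_add_expand hS] at h
  rw [q_sub_expand hS]
  linarith

lemma q_neg (a : Fin n → ℝ) : (-a) ⬝ᵥ (S *ᵥ (-a)) = a ⬝ᵥ (S *ᵥ a) := by
  simp [Matrix.mulVec_neg, dotProduct_neg, neg_dotProduct]
end Quad


open MeasureTheory Real Matrix ENNReal

open Classical in

lemma exp_neg_sub_exp_neg_le (a b : ℝ) (ha : 0 ≤ a) : Real.exp (-a) - Real.exp (-b) ≤ |a - b| := by
  rcases le_total a b with hab | hab
  · rw [abs_of_nonpos (by linarith)]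
    have h1 : Real.exp (-a) ≤ 1 := Real.exp_le_one_iff.2 (by linarith)
    have h2 : (a - b) + 1 ≤ Real.exp (a - b) := Real.add_one_le_exp _
    have hprod : Real.exp (-a) * Real.exp (a - b) = Real.exp (-b) := by
      rw [← Real.exp_add]; ring_nf
    nlinarith [Real.exp_pos (-a), Real.exp_pos (a - b)]
  · have : Real.exp (-a) ≤ Real.exp (-b) := Real.exp_le_exp.2 (by linarith)
    calc Real.exp (-a) - Real.exp (-b) ≤ 0 := by linarith
      _ ≤ |a - b| := abs_nonneg _

lemma KL_le {X : Type*} [MeasurableSpace X] (μ : Measure X) [IsProbabilityMeasure μ]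
    (φ ψ : X → ℝ) (hφm : Measurable φ) (hψm : Measurable ψ)
    (hφ0 : ∀ x, 0 ≤ φ x) (hψ0 : ∀ x, 0 ≤ ψ x)
    (hφi : Integrable φ μ) (hψi : Integrable ψ μ) :
    KLdiv (posterior μ ψ) (posterior μ φ) ≤
      ENNReal.ofReal (2 * Real.exp (∫ x, ψ x ∂μ) * ∫ x, |φ x - ψ x| ∂μ) := by
  have hNZ : NeZero μ := ⟨IsProbabilityMeasure.ne_zero μ⟩
  set Z := ∫ x, Real.exp (-ψ x) ∂μ with hZdef
  set W := ∫ x, Real.exp (-φ x) ∂μ with hWdef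
  set D := ∫ x, |φ x - ψ x| ∂μ with hDdef
  have hD0 : 0 ≤ D := integral_nonneg fun x => abs_nonneg _
  have hexψ : Integrable (fun x => Real.exp (-ψ x)) μ := by
    refine Integrable.mono' (integrable_const 1) (hψm.neg.exp).aestronglyMeasurable ?_
    exact ae_of_all _ fun x => by
      rw [Real.norm_eq_abs, abs_of_nonneg (Real.exp_pos _).le]
      exact Real.exp_le_one_iff.2 (by linarith [hψ0 x])
  have hexφ : Integrable (fun x => Real.exp (-φ x)) μ := by
    refine Integrable.mono' (integrable_const 1) (hφm.neg.exp).aestronglyMeasurable ?_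
    exact ae_of_all _ fun x => by
      rw [Real.norm_eq_abs, abs_of_nonneg (Real.exp_pos _).le]
      exact Real.exp_le_one_iff.2 (by linarith [hφ0 x])
  have hZpos : 0 < Z := integral_exp_pos hexψ
  have hWpos : 0 < W := integral_exp_pos hexφ
  set h : X → ℝ := fun x => φ x - ψ x with hhdef
  have hhi : Integrable h μ := hφi.sub hψi
  have hpostφ : posterior μ φ = μ.tilted (fun x => -φ x) := rfl
  have htilt : posterior μ ψ = (μ.tilted fun x => -φ x).tilted h := by
    rw [tilted_tilted hexφ]
    show (μ.tilted fun x => -ψ x) = _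
    congr 1
    funext x
    show -ψ x = -φ x + (φ x - ψ x)
    ring
  haveI hPφ : IsProbabilityMeasure (μ.tilted fun x => -φ x) :=
    isProbabilityMeasure_tilted hexφ
  -- integrability of exp h under the tilted measure
  have hexph : Integrable (fun x => Real.exp (h x)) (μ.tilted fun x => -φ x) := by
    rw [Measure.tilted, integrable_withDensity_iff
      (f := fun x => ENNReal.ofReal (Real.exp (-φ x) / ∫ x', Real.exp (-φ x') ∂μ))
      ((hφm.neg.exp.div_const _).ennreal_ofReal) (ae_of_all _ fun x => ENNReal.ofReal_lt_top)]
    have heq : ∀ x, Real.exp (h x) * (ENNReal.ofReal (Real.exp (-φ x) / W)).toReal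
        = Real.exp (-ψ x) / W := by
      intro x
      rw [ENNReal.toReal_ofReal (by positivity), hhdef]
      rw [div_eq_mul_inv, div_eq_mul_inv, ← mul_assoc, ← Real.exp_add]
      ring_nf
    exact (hexψ.div_const W).congr (ae_of_all _ fun x => (heq x).symm)
  set c := ∫ x, Real.exp (h x) ∂(μ.tilted fun x => -φ x) with hcdef
  have hc : c = Z / W := by
    rw [hcdef, integral_exp_tilted]
    congr 1
    refine integral_congr_ae (ae_of_all _ fun x => ?_)
    simp only [Pi.add_apply]
    congr 1
    show -φ x + (φ x - ψ x) = -ψ x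
    ring
  have hcpos : 0 < c := hc ▸ div_pos hZpos hWpos
  have hlog := log_rnDeriv_tilted_left_self (μ := μ.tilted fun x => -φ x) (f := h) hexph
  have hAC : (μ.tilted fun x => -φ x).tilted h ≪ (μ.tilted fun x => -φ x) :=
    tilted_absolutelyContinuous _ _
  have hlog' := hAC.ae_eq hlog
  -- integrability of h under posterior μ ψ
  have hmle : μ.tilted (fun x => -ψ x) ≤ (ENNReal.ofReal (1 / Z)) • μ := by
    rw [Measure.tilted, ← withDensity_const]
    refine withDensity_mono (ae_of_all _ fun x => ?_)
    refine ENNReal.ofReal_le_ofReal ?_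
    gcongr
    exact Real.exp_le_one_iff.2 (by linarith [hψ0 x])
  have hInth : Integrable h ((μ.tilted fun x => -φ x).tilted h) := by
    have h1 : Integrable h ((ENNReal.ofReal (1 / Z)) • μ) :=
      hhi.smul_measure ENNReal.ofReal_ne_top
    have := h1.mono_measure hmle
    rwa [show (μ.tilted fun x => -ψ x) = (μ.tilted fun x => -φ x).tilted h from htilt ▸ htilt]
      at this
  have hIntegrand : Integrable (fun x => h x - Real.log c)
      ((μ.tilted fun x => -φ x).tilted h) := hInth.sub (integrable_const _)
  have hIntKL : Integrable
      (fun x => Real.log ((((μ.tilted fun x => -φ x).tilted h).rnDeriv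
        (μ.tilted fun x => -φ x)) x).toReal) ((μ.tilted fun x => -φ x).tilted h) :=
    hIntegrand.congr hlog'.symm
  rw [htilt, hpostφ, KLdiv, if_pos (⟨hAC, hIntKL⟩ : _ ∧ _)]
  refine ENNReal.ofReal_le_ofReal ?_
  haveI hPψ : IsProbabilityMeasure ((μ.tilted fun x => -φ x).tilted h) := by
    rw [← htilt]
    exact isProbabilityMeasure_tilted hexψ
  rw [integral_congr_ae hlog', integral_sub hInth (integrable_const _), integral_const]
  simp only [measure_univ, probReal_univ, ENNReal.toReal_one, one_smul, smul_eq_mul, one_mul]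
  -- bound ∫ h
  have habs_eq : ∫ x, |h x| ∂((μ.tilted fun x => -φ x).tilted h)
      = ∫ x, (Real.exp (-ψ x) / Z) * |h x| ∂μ := by
    rw [← htilt]
    show ∫ x, |h x| ∂(μ.tilted fun x => -ψ x) = _
    rw [integral_tilted]
    simp [smul_eq_mul]
    rfl
  have habs_le : ∫ x, |h x| ∂((μ.tilted fun x => -φ x).tilted h) ≤ D / Z := by
    rw [habs_eq]
    have hle : ∫ x, (Real.exp (-ψ x) / Z) * |h x| ∂μ ≤ ∫ x, (1 / Z) * |h x| ∂μ := by
      have hkey : ∀ x, (Real.exp (-ψ x) / Z) * |h x| ≤ (1 / Z) * |h x| := by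
        intro x
        have hdd : Real.exp (-ψ x) / Z ≤ 1 / Z := by
          gcongr
          exact Real.exp_le_one_iff.2 (by linarith [hψ0 x])
        exact mul_le_mul_of_nonneg_right hdd (abs_nonneg _)
      refine integral_mono ?_ (hhi.abs.const_mul _) hkey
      refine Integrable.mono' (hhi.abs.const_mul (1 / Z))
        (((hψm.neg.exp.div_const _).mul (hφm.sub hψm).abs)).aestronglyMeasurable
        (ae_of_all _ fun x => ?_)
      rw [Real.norm_eq_abs, abs_of_nonneg (by positivity)]
      exact hkey x
    calc ∫ x, (Real.exp (-ψ x) / Z) * |h x| ∂μ ≤ ∫ x, (1 / Z) * |h x| ∂μ := hle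
      _ = (1 / Z) * D := by rw [integral_const_mul]
      _ = D / Z := by ring
  have hIh : ∫ x, h x ∂((μ.tilted fun x => -φ x).tilted h) ≤ D / Z :=
    le_trans (integral_mono hInth hInth.abs fun x => le_abs_self _) habs_le
  -- bound -log c
  have hWZ : W - Z ≤ D := by
    have hsub : W - Z = ∫ x, (Real.exp (-φ x) - Real.exp (-ψ x)) ∂μ := by
      rw [integral_sub hexφ hexψ]
    rw [hsub]
    exact integral_mono (hexφ.sub hexψ) hhi.abs fun x => exp_neg_sub_exp_neg_le _ _ (hφ0 x)
  have hlogc : -Real.log c ≤ D / Z := by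
    rw [hc, ← Real.log_inv, inv_div]
    calc Real.log (W / Z) ≤ W / Z - 1 := Real.log_le_sub_one_of_pos (div_pos hWpos hZpos)
      _ = (W - Z) / Z := by field_simp
      _ ≤ D / Z := by gcongr
  -- lower bound on Z
  have hZlb : Real.exp (-(∫ x, ψ x ∂μ)) ≤ Z := by
    set m := ∫ x, ψ x ∂μ with hmdef
    have hpt : ∀ x, Real.exp (-m) * ((m - ψ x) + 1) ≤ Real.exp (-ψ x) := by
      intro x
      have h2 : (m - ψ x) + 1 ≤ Real.exp (m - ψ x) := Real.add_one_le_exp _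
      have hprod : Real.exp (-m) * Real.exp (m - ψ x) = Real.exp (-ψ x) := by
        rw [← Real.exp_add]; ring_nf
      nlinarith [Real.exp_pos (-m)]
    have hint : Integrable (fun x => Real.exp (-m) * ((m - ψ x) + 1)) μ := by
      have hi2 : Integrable (fun x => (m + 1) - ψ x) μ := (integrable_const (m + 1)).sub hψi
      exact (hi2.congr (ae_of_all _ fun x => by
        first | ring | (simp only [Pi.sub_apply]; ring))).const_mul _
    have := integral_mono hint hexψ (fun x => hpt x)
    calc Real.exp (-m) = Real.exp (-m) * ((m + 1) - m) := by ring
      _ = ∫ x, Real.exp (-m) * ((m - ψ x) + 1) ∂μ := by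
          rw [integral_const_mul]
          congr 1
          have : ∫ x, ((m - ψ x) + 1) ∂μ = ∫ x, ((m + 1) - ψ x) ∂μ :=
            integral_congr_ae (ae_of_all _ fun x => by ring)
          rw [this, integral_sub (integrable_const _) hψi, integral_const]
          simp [measure_univ, hmdef]
      _ ≤ Z := this
  have hZinv : 1 / Z ≤ Real.exp (∫ x, ψ x ∂μ) := by
    rw [div_le_iff₀ hZpos]
    have h1 : Real.exp (∫ x, ψ x ∂μ) * Real.exp (-(∫ x, ψ x ∂μ)) = 1 := by
      rw [← Real.exp_add]; simp
    calc (1:ℝ) = Real.exp (∫ x, ψ x ∂μ) * Real.exp (-(∫ x, ψ x ∂μ)) := h1.symm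
      _ ≤ Real.exp (∫ x, ψ x ∂μ) * Z :=
          mul_le_mul_of_nonneg_left hZlb (Real.exp_pos _).le
  calc ∫ x, h x ∂((μ.tilted fun x => -φ x).tilted h) - Real.log c
      ≤ D / Z + D / Z := by linarith
    _ = 2 * (D * (1 / Z)) := by ring
    _ ≤ 2 * (D * Real.exp (∫ x, ψ x ∂μ)) := by gcongr
    _ = 2 * Real.exp (∫ x, ψ x ∂μ) * D := by ring
open MeasureTheory Real Matrix ENNReal

theorem stmt3 {X U : Type*} [MeasurableSpace X] [NormedAddCommGroup U] [NormedSpace ℝ U]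
    [CompleteSpace U] [MeasurableSpace U] [BorelSpace U]
    (μ : Measure X) [IsProbabilityMeasure μ] {n : ℕ}
    (Mdag Mappr : X → U) (hMdag : Measurable Mdag) (hMappr : Measurable Mappr)
    (O : U →L[ℝ] (Fin n → ℝ)) (y : Fin n → ℝ)
    (Γ : Matrix (Fin n) (Fin n) ℝ) (hΓ : Γ.PosDef)
    (Φdag Φappr : X → ℝ)
    (hΦdag : Φdag = fun θ => (1/2) * ((y - O (Mdag θ)) ⬝ᵥ (Γ⁻¹ *ᵥ (y - O (Mdag θ)))))
    (hΦappr : Φappr = fun θ => (1/2) * ((y - O (Mappr θ)) ⬝ᵥ (Γ⁻¹ *ᵥ (y - O (Mappr θ)))))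
    (hid : Integrable Φdag μ) (hia : Integrable Φappr μ) :
    max (KLdiv (posterior μ Φappr) (posterior μ Φdag))
        (KLdiv (posterior μ Φdag) (posterior μ Φappr)) ≤
      ENNReal.ofReal
        ((Real.sqrt 2 * Real.exp (2 * (∫ θ, |Φdag θ| ∂μ) + 2 * ∫ θ, |Φappr θ| ∂μ) *
            (Real.sqrt (∫ θ, |Φdag θ| ∂μ) + Real.sqrt (∫ θ, |Φappr θ| ∂μ))) *
          Real.sqrt (∫ θ, |(O (Mdag θ - Mappr θ)) ⬝ᵥ (Γ⁻¹ *ᵥ (O (Mdag θ - Mappr θ)))| ∂μ)) := by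
  set S := Γ⁻¹ with hSdef
  have hS : S.PosSemidef := hΓ.inv.posSemidef
  -- continuity of the quadratic form
  have hqcont : Continuous fun v : Fin n → ℝ => v ⬝ᵥ (S *ᵥ v) := by
    have heq : (fun v : Fin n → ℝ => v ⬝ᵥ (S *ᵥ v))
        = fun v => ∑ i, v i * ∑ j, S i j * v j := by
      funext v; simp [dotProduct, Matrix.mulVec]
    rw [heq]
    exact continuous_finset_sum _ fun i _ => (continuous_apply i).mul
      (continuous_finset_sum _ fun j _ => continuous_const.mul (continuous_apply j))
  have hOMd : Measurable fun θ => O (Mdag θ) := O.continuous.measurable.comp hMdag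
  have hOMa : Measurable fun θ => O (Mappr θ) := O.continuous.measurable.comp hMappr
  have hΦdm : Measurable Φdag := by
    rw [hΦdag]
    exact (hqcont.measurable.comp (measurable_const.sub hOMd)).const_mul _
  have hΦam : Measurable Φappr := by
    rw [hΦappr]
    exact (hqcont.measurable.comp (measurable_const.sub hOMa)).const_mul _
  have hΦd0 : ∀ θ, 0 ≤ Φdag θ := fun θ => by
    rw [hΦdag]; exact mul_nonneg (by norm_num) (q_nonneg hS _)
  have hΦa0 : ∀ θ, 0 ≤ Φappr θ := fun θ => by
    rw [hΦappr]; exact mul_nonneg (by norm_num) (q_nonneg hS _)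
  have hEqv : ∀ θ, (y - O (Mdag θ)) - (y - O (Mappr θ)) = -(O (Mdag θ - Mappr θ)) := by
    intro θ; rw [map_sub]; abel
  set Ld := ∫ θ, |Φdag θ| ∂μ with hLddef
  set La := ∫ θ, |Φappr θ| ∂μ with hLadef
  set E := ∫ θ, |(O (Mdag θ - Mappr θ)) ⬝ᵥ (S *ᵥ (O (Mdag θ - Mappr θ)))| ∂μ with hEdef
  have hLdeq : ∫ θ, Φdag θ ∂μ = Ld :=
    (integral_congr_ae (ae_of_all _ fun θ => (abs_of_nonneg (hΦd0 θ)).symm))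
  have hLaeq : ∫ θ, Φappr θ ∂μ = La :=
    (integral_congr_ae (ae_of_all _ fun θ => (abs_of_nonneg (hΦa0 θ)).symm))
  have hLd0 : 0 ≤ Ld := hLdeq ▸ integral_nonneg hΦd0
  have hLa0 : 0 ≤ La := hLaeq ▸ integral_nonneg hΦa0
  have hEabs : E = ∫ θ, (O (Mdag θ - Mappr θ)) ⬝ᵥ (S *ᵥ (O (Mdag θ - Mappr θ))) ∂μ :=
    integral_congr_ae (ae_of_all _ fun θ => abs_of_nonneg (q_nonneg hS _))
  -- integrability of the model-error quadratic form
  have hOδ : Measurable fun θ => O (Mdag θ - Mappr θ) := by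
    have : (fun θ => O (Mdag θ - Mappr θ)) = fun θ => O (Mdag θ) - O (Mappr θ) :=
      funext fun θ => map_sub O _ _
    rw [this]
    exact hOMd.sub hOMa
  have hqδm : Measurable fun θ => (O (Mdag θ - Mappr θ)) ⬝ᵥ (S *ᵥ (O (Mdag θ - Mappr θ))) :=
    hqcont.measurable.comp hOδ
  have hqδ_le : ∀ θ, (O (Mdag θ - Mappr θ)) ⬝ᵥ (S *ᵥ (O (Mdag θ - Mappr θ)))
      ≤ 4 * Φdag θ + 4 * Φappr θ := by
    intro θ
    have h1 := q_sub_le_two hS (y - O (Mdag θ)) (y - O (Mappr θ))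
    rw [hEqv θ, q_neg] at h1
    have h2 : (y - O (Mdag θ)) ⬝ᵥ (S *ᵥ (y - O (Mdag θ))) = 2 * Φdag θ := by
      rw [hΦdag]; ring
    have h3 : (y - O (Mappr θ)) ⬝ᵥ (S *ᵥ (y - O (Mappr θ))) = 2 * Φappr θ := by
      rw [hΦappr]; ring
    rw [h2, h3] at h1
    linarith
  have hqδi : Integrable (fun θ => (O (Mdag θ - Mappr θ)) ⬝ᵥ (S *ᵥ (O (Mdag θ - Mappr θ)))) μ := by
    refine Integrable.mono' ((hid.const_mul 4).add (hia.const_mul 4))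
      hqδm.aestronglyMeasurable (ae_of_all _ fun θ => ?_)
    rw [Real.norm_eq_abs, abs_of_nonneg (q_nonneg hS _)]
    exact hqδ_le θ
  -- pointwise bound on the misfit difference
  have hpoint : ∀ θ, |Φdag θ - Φappr θ| ≤ Real.sqrt 2 / 2 *
      (Real.sqrt ((O (Mdag θ - Mappr θ)) ⬝ᵥ (S *ᵥ (O (Mdag θ - Mappr θ)))) *
        (Real.sqrt (Φdag θ) + Real.sqrt (Φappr θ))) := by
    intro θ
    have h2 := q_diff_le hS (y - O (Mdag θ)) (y - O (Mappr θ))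
    have h3 : ((y - O (Mdag θ)) - (y - O (Mappr θ))) ⬝ᵥ
        (S *ᵥ ((y - O (Mdag θ)) - (y - O (Mappr θ))))
        = (O (Mdag θ - Mappr θ)) ⬝ᵥ (S *ᵥ (O (Mdag θ - Mappr θ))) := by
      rw [hEqv θ, q_neg]
    have hqA : (y - O (Mdag θ)) ⬝ᵥ (S *ᵥ (y - O (Mdag θ))) = 2 * Φdag θ := by
      rw [hΦdag]; ring
    have hqB : (y - O (Mappr θ)) ⬝ᵥ (S *ᵥ (y - O (Mappr θ))) = 2 * Φappr θ := by
      rw [hΦappr]; ring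
    rw [h3, hqA, hqB] at h2
    rw [Real.sqrt_mul (by norm_num : (0:ℝ) ≤ 2) (Φdag θ),
      Real.sqrt_mul (by norm_num : (0:ℝ) ≤ 2) (Φappr θ)] at h2
    have habs2 : |2 * Φdag θ - 2 * Φappr θ| = 2 * |Φdag θ - Φappr θ| := by
      rw [show 2 * Φdag θ - 2 * Φappr θ = 2 * (Φdag θ - Φappr θ) by ring, abs_mul, abs_two]
    rw [habs2] at h2
    have h5 : Real.sqrt ((O (Mdag θ - Mappr θ)) ⬝ᵥ (S *ᵥ (O (Mdag θ - Mappr θ)))) *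
        (Real.sqrt 2 * Real.sqrt (Φdag θ) + Real.sqrt 2 * Real.sqrt (Φappr θ))
        = Real.sqrt 2 * (Real.sqrt ((O (Mdag θ - Mappr θ)) ⬝ᵥ (S *ᵥ (O (Mdag θ - Mappr θ)))) *
          (Real.sqrt (Φdag θ) + Real.sqrt (Φappr θ))) := by ring
    rw [h5] at h2
    rw [show Real.sqrt 2 / 2 *
      (Real.sqrt ((O (Mdag θ - Mappr θ)) ⬝ᵥ (S *ᵥ (O (Mdag θ - Mappr θ)))) *
        (Real.sqrt (Φdag θ) + Real.sqrt (Φappr θ)))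
      = (Real.sqrt 2 * (Real.sqrt ((O (Mdag θ - Mappr θ)) ⬝ᵥ (S *ᵥ (O (Mdag θ - Mappr θ)))) *
          (Real.sqrt (Φdag θ) + Real.sqrt (Φappr θ)))) / 2 by ring]
    linarith
  -- integrability of the products of square roots
  have hsqm : Measurable fun θ =>
      Real.sqrt ((O (Mdag θ - Mappr θ)) ⬝ᵥ (S *ᵥ (O (Mdag θ - Mappr θ)))) :=
    Real.continuous_sqrt.measurable.comp hqδm
  have hprod_int : ∀ (Φ : X → ℝ), Measurable Φ → (∀ θ, 0 ≤ Φ θ) → Integrable Φ μ →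
      Integrable (fun θ => Real.sqrt ((O (Mdag θ - Mappr θ)) ⬝ᵥ
        (S *ᵥ (O (Mdag θ - Mappr θ)))) * Real.sqrt (Φ θ)) μ := by
    intro Φ hm h0 hi
    refine Integrable.mono' ((hqδi.const_mul (1/2)).add (hi.const_mul (1/2)))
      (hsqm.mul (Real.continuous_sqrt.measurable.comp hm)).aestronglyMeasurable
      (ae_of_all _ fun θ => ?_)
    rw [Real.norm_eq_abs, abs_of_nonneg (mul_nonneg (Real.sqrt_nonneg _) (Real.sqrt_nonneg _))]
    simp only [Pi.add_apply]
    have e1 := Real.sq_sqrt (q_nonneg hS (O (Mdag θ - Mappr θ)))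
    have e2 := Real.sq_sqrt (h0 θ)
    nlinarith [sq_nonneg (Real.sqrt ((O (Mdag θ - Mappr θ)) ⬝ᵥ
      (S *ᵥ (O (Mdag θ - Mappr θ)))) - Real.sqrt (Φ θ))]
  -- Hölder (Cauchy-Schwarz) bound
  have hCS : ∀ (Φ : X → ℝ), Measurable Φ → (∀ θ, 0 ≤ Φ θ) → Integrable Φ μ →
      ∫ θ, Real.sqrt ((O (Mdag θ - Mappr θ)) ⬝ᵥ (S *ᵥ (O (Mdag θ - Mappr θ)))) *
        Real.sqrt (Φ θ) ∂μ ≤ Real.sqrt E * Real.sqrt (∫ θ, Φ θ ∂μ) := by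
    intro Φ hm h0 hi
    have hconj : (2:ℝ).HolderConjugate 2 := Real.HolderConjugate.two_two
    have hofr : (ENNReal.ofReal (2:ℝ)) = 2 := by
      rw [ENNReal.ofReal_ofNat]
    have hL1 : MemLp (fun θ => Real.sqrt ((O (Mdag θ - Mappr θ)) ⬝ᵥ
        (S *ᵥ (O (Mdag θ - Mappr θ))))) (ENNReal.ofReal 2) μ := by
      rw [hofr]
      refine (memLp_two_iff_integrable_sq hsqm.aestronglyMeasurable).2 ?_
      exact hqδi.congr (ae_of_all _ fun θ => (Real.sq_sqrt (q_nonneg hS _)).symm)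
    have hL2 : MemLp (fun θ => Real.sqrt (Φ θ)) (ENNReal.ofReal 2) μ := by
      rw [hofr]
      refine (memLp_two_iff_integrable_sq
        (Real.continuous_sqrt.measurable.comp hm).aestronglyMeasurable).2 ?_
      exact hi.congr (ae_of_all _ fun θ => (Real.sq_sqrt (h0 θ)).symm)
    have hH := integral_mul_le_Lp_mul_Lq_of_nonneg hconj
      (ae_of_all _ fun θ => Real.sqrt_nonneg _) (ae_of_all _ fun θ => Real.sqrt_nonneg _) hL1 hL2
    have hr1 : ∫ θ, Real.sqrt ((O (Mdag θ - Mappr θ)) ⬝ᵥ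
        (S *ᵥ (O (Mdag θ - Mappr θ)))) ^ (2:ℝ) ∂μ
        = ∫ θ, (O (Mdag θ - Mappr θ)) ⬝ᵥ (S *ᵥ (O (Mdag θ - Mappr θ))) ∂μ := by
      refine integral_congr_ae (ae_of_all _ fun θ => ?_)
      beta_reduce
      rw [show (2:ℝ) = ((2:ℕ):ℝ) by norm_num, Real.rpow_natCast, Real.sq_sqrt (q_nonneg hS _)]
    have hr2 : ∫ θ, Real.sqrt (Φ θ) ^ (2:ℝ) ∂μ = ∫ θ, Φ θ ∂μ := by
      refine integral_congr_ae (ae_of_all _ fun θ => ?_)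
      beta_reduce
      rw [show (2:ℝ) = ((2:ℕ):ℝ) by norm_num, Real.rpow_natCast, Real.sq_sqrt (h0 θ)]
    rw [hr1, hr2] at hH
    calc ∫ θ, Real.sqrt ((O (Mdag θ - Mappr θ)) ⬝ᵥ (S *ᵥ (O (Mdag θ - Mappr θ)))) *
          Real.sqrt (Φ θ) ∂μ
        ≤ (∫ θ, (O (Mdag θ - Mappr θ)) ⬝ᵥ (S *ᵥ (O (Mdag θ - Mappr θ))) ∂μ) ^ ((1:ℝ)/2) *
          (∫ θ, Φ θ ∂μ) ^ ((1:ℝ)/2) := hH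
      _ = Real.sqrt E * Real.sqrt (∫ θ, Φ θ ∂μ) := by
          rw [← Real.sqrt_eq_rpow, ← Real.sqrt_eq_rpow, hEabs]
  -- bound on D
  have hDle : ∫ θ, |Φdag θ - Φappr θ| ∂μ ≤
      Real.sqrt 2 / 2 * (Real.sqrt E * (Real.sqrt Ld + Real.sqrt La)) := by
    have hint1 := hprod_int Φdag hΦdm hΦd0 hid
    have hint2 := hprod_int Φappr hΦam hΦa0 hia
    have hstep : ∫ θ, |Φdag θ - Φappr θ| ∂μ ≤
        ∫ θ, Real.sqrt 2 / 2 * (Real.sqrt ((O (Mdag θ - Mappr θ)) ⬝ᵥ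
          (S *ᵥ (O (Mdag θ - Mappr θ)))) * (Real.sqrt (Φdag θ) + Real.sqrt (Φappr θ))) ∂μ := by
      refine integral_mono (hid.sub hia).abs ?_ hpoint
      refine Integrable.const_mul ?_ _
      exact (hint1.add hint2).congr (ae_of_all _ fun θ => by
        simp only [Pi.add_apply]; ring)
    refine hstep.trans ?_
    rw [integral_const_mul]
    have hsplit : ∫ θ, Real.sqrt ((O (Mdag θ - Mappr θ)) ⬝ᵥ
        (S *ᵥ (O (Mdag θ - Mappr θ)))) * (Real.sqrt (Φdag θ) + Real.sqrt (Φappr θ)) ∂μ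
        = (∫ θ, Real.sqrt ((O (Mdag θ - Mappr θ)) ⬝ᵥ (S *ᵥ (O (Mdag θ - Mappr θ)))) *
            Real.sqrt (Φdag θ) ∂μ)
          + ∫ θ, Real.sqrt ((O (Mdag θ - Mappr θ)) ⬝ᵥ (S *ᵥ (O (Mdag θ - Mappr θ)))) *
            Real.sqrt (Φappr θ) ∂μ := by
      rw [← integral_add hint1 hint2]
      exact integral_congr_ae (ae_of_all _ fun θ => by ring)
    rw [hsplit]
    have hb1 := (hCS Φdag hΦdm hΦd0 hid).trans_eq (by rw [hLdeq])
    have hb2 := (hCS Φappr hΦam hΦa0 hia).trans_eq (by rw [hLaeq])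
    have : Real.sqrt E * Real.sqrt Ld + Real.sqrt E * Real.sqrt La
        = Real.sqrt E * (Real.sqrt Ld + Real.sqrt La) := by ring
    nlinarith [Real.sqrt_nonneg (2:ℝ)]
  -- final assembly
  have hD0 : 0 ≤ ∫ θ, |Φdag θ - Φappr θ| ∂μ := integral_nonneg fun θ => abs_nonneg _
  have hfinal : ∀ L : ℝ, L ≤ 2 * Ld + 2 * La →
      2 * Real.exp L * ∫ θ, |Φdag θ - Φappr θ| ∂μ ≤
      (Real.sqrt 2 * Real.exp (2 * Ld + 2 * La) * (Real.sqrt Ld + Real.sqrt La)) *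
        Real.sqrt E := by
    intro L hL
    calc 2 * Real.exp L * ∫ θ, |Φdag θ - Φappr θ| ∂μ
        ≤ 2 * Real.exp L * (Real.sqrt 2 / 2 * (Real.sqrt E * (Real.sqrt Ld + Real.sqrt La))) := by
          exact mul_le_mul_of_nonneg_left hDle (by positivity)
      _ ≤ 2 * Real.exp (2 * Ld + 2 * La) *
            (Real.sqrt 2 / 2 * (Real.sqrt E * (Real.sqrt Ld + Real.sqrt La))) := by
          gcongr
      _ = (Real.sqrt 2 * Real.exp (2 * Ld + 2 * La) * (Real.sqrt Ld + Real.sqrt La)) *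
            Real.sqrt E := by ring
  refine max_le ?_ ?_
  · refine le_trans (KL_le μ Φdag Φappr hΦdm hΦam hΦd0 hΦa0 hid hia) ?_
    refine ENNReal.ofReal_le_ofReal ?_
    rw [hLaeq]
    exact hfinal La (by linarith)
  · refine le_trans (KL_le μ Φappr Φdag hΦam hΦdm hΦa0 hΦd0 hia hid) ?_
    refine ENNReal.ofReal_le_ofReal ?_
    rw [hLdeq]
    have hcomm : ∫ θ, |Φappr θ - Φdag θ| ∂μ = ∫ θ, |Φdag θ - Φappr θ| ∂μ :=
      integral_congr_ae (ae_of_all _ fun θ => abs_sub_comm _ _)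
    rw [hcomm]
    exact hfinal Ld (by linarith)
end

section
/- If the approximate misfit Φ^a and the enhanced noise misfit Φ^e both belong to L¹_{μ_θ}, then max{ d_KL(μ^a ‖ μ^e), d_KL(μ^e ‖ μ^a) } ≤ C · ( |O m_ε|_{Σ_η^{−1}} + ‖ |y − O∘M − O m_ε|²_{Σ_η^{−1} − (Σ_η+S)^{−1}} ‖_{L¹_{μ_θ}} ), where μ^a := (μ_θ)_{Φ^a}, μ^e := (μ_θ)_{Φ^e}, and C = exp( 2‖Φ^a‖_{L¹_{μ_θ}} + 2‖Φ^e‖_{L¹_{μ_θ}} ) · max{ √2 · ( ‖Φ^a‖_{L¹_{μ_θ}}^{1/2} + C_e · ‖Φ^e‖_{L¹_{μ_θ}}^{1/2} ), 1 }. -/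
open MeasureTheory Real Matrix ENNReal

/-- The ℓ²→ℓ² operator norm of a real square matrix. -/
noncomputable def matOpNorm {n : ℕ} (A : Matrix (Fin n) (Fin n) ℝ) : ℝ :=
  ‖LinearMap.toContinuousLinearMap (Matrix.toEuclideanLin A)‖

open scoped ComplexOrder in
/-- The square root of a positive semidefinite matrix, as `Matrix.PosSemidef.sqrt` was defined
in the older Mathlib (since removed there). -/
noncomputable def posSemidefSqrt {n 𝕜 : Type*} [Fintype n] [DecidableEq n] [RCLike 𝕜]
    {A : Matrix n n 𝕜} (hA : A.PosSemidef) : Matrix n n 𝕜 :=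
  hA.1.eigenvectorUnitary.1 * diagonal ((↑) ∘ (√·) ∘ hA.1.eigenvalues) *
    (star hA.1.eigenvectorUnitary : Matrix n n 𝕜)



section auxA
variable {α : Type*} {mα : MeasurableSpace α} {μ : Measure α} {Φ : α → ℝ}

lemma integrable_exp_neg' [IsFiniteMeasure μ] (hΦ : Integrable Φ μ) (hn : ∀ x, 0 ≤ Φ x) :
    Integrable (fun x => exp (-Φ x)) μ := by
  refine Integrable.mono' (integrable_const 1) ?_ ?_
  · exact Real.continuous_exp.comp_aestronglyMeasurable hΦ.1.neg
  · filter_upwards with x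
    rw [Real.norm_eq_abs, abs_of_pos (exp_pos _)]
    exact Real.exp_le_one_iff.mpr (neg_nonpos.mpr (hn x))

lemma exp_neg_integral_le [IsProbabilityMeasure μ] (hΦ : Integrable Φ μ) (hn : ∀ x, 0 ≤ Φ x) :
    exp (-(∫ x, Φ x ∂μ)) ≤ ∫ x, exp (-Φ x) ∂μ := by
  set I := ∫ x, Φ x ∂μ with hI
  have key : ∀ x, exp (-I) * ((1 + I) - Φ x) ≤ exp (-Φ x) := by
    intro x
    have h1 : (1 + (I - Φ x)) ≤ exp (I - Φ x) := by linarith [Real.add_one_le_exp (I - Φ x)]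
    have h2 : exp (-I) * exp (I - Φ x) = exp (-Φ x) := by
      rw [← Real.exp_add]; ring_nf
    calc exp (-I) * ((1 + I) - Φ x) = exp (-I) * (1 + (I - Φ x)) := by ring
    _ ≤ exp (-I) * exp (I - Φ x) := by
        exact mul_le_mul_of_nonneg_left h1 (exp_pos _).le
    _ = exp (-Φ x) := h2
  have hint1 : Integrable (fun x => exp (-I) * ((1 + I) - Φ x)) μ :=
    (((integrable_const (1 + I)).sub hΦ).const_mul _)
  have := integral_mono hint1 (integrable_exp_neg' hΦ hn) key
  calc exp (-I) = exp (-I) * ((1 + I) - I) := by ring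
  _ = ∫ x, exp (-I) * ((1 + I) - Φ x) ∂μ := by
      rw [MeasureTheory.integral_const_mul, integral_sub (integrable_const _) hΦ, integral_const]
      simp [← hI]
  _ ≤ _ := this

lemma abs_exp_neg_sub_le {a b : ℝ} (ha : 0 ≤ a) (hb : 0 ≤ b) :
    |exp (-a) - exp (-b)| ≤ |a - b| := by
  wlog h : b ≤ a generalizing a b
  · rw [abs_sub_comm, abs_sub_comm a b]; exact this hb ha (le_of_not_ge h)
  have hmono : exp (-a) ≤ exp (-b) := Real.exp_le_exp.mpr (by linarith)
  rw [abs_of_nonpos (by linarith), abs_of_nonneg (by linarith)]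
  have h1 : exp (-b) ≤ 1 := Real.exp_le_one_iff.mpr (by linarith)
  have h2 : exp (-a) = exp (-b) * exp (b - a) := by rw [← Real.exp_add]; ring_nf
  have h3 : 1 + (b - a) ≤ exp (b - a) := by linarith [Real.add_one_le_exp (b - a)]
  nlinarith [mul_le_mul_of_nonneg_left h3 (exp_pos (-b)).le,
    mul_le_mul_of_nonneg_right h1 (sub_nonneg.mpr h)]

lemma integrable_tilted_iff {f : α → ℝ} (hf : Integrable (fun x => exp (f x)) μ) (ψ : α → ℝ) :
    Integrable ψ (μ.tilted f) ↔
      Integrable (fun x => (exp (f x) / ∫ x, exp (f x) ∂μ) * ψ x) μ := by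
  rw [tilted_eq_withDensity_nnreal, integrable_withDensity_iff_integrable_coe_smul₀]
  · simp only [NNReal.coe_mk, smul_eq_mul]
  · rw [← aemeasurable_coe_nnreal_real_iff]
    simpa only [NNReal.coe_mk] using hf.1.aemeasurable.div_const _

lemma kl_posterior_le [IsProbabilityMeasure μ] {Φ1 Φ2 : α → ℝ}
    (h1 : Integrable Φ1 μ) (h2 : Integrable Φ2 μ)
    (h1n : ∀ x, 0 ≤ Φ1 x) (h2n : ∀ x, 0 ≤ Φ2 x) :
    KLdiv (posterior μ Φ1) (posterior μ Φ2) ≤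
      ENNReal.ofReal (2 * exp ((∫ x, Φ1 x ∂μ) + ∫ x, Φ2 x ∂μ) * ∫ x, |Φ1 x - Φ2 x| ∂μ) := by
  have hexp1 : Integrable (fun x => exp (-Φ1 x)) μ := integrable_exp_neg' h1 h1n
  have hexp2 : Integrable (fun x => exp (-Φ2 x)) μ := integrable_exp_neg' h2 h2n
  set Z1 := ∫ x, exp (-Φ1 x) ∂μ with hZ1
  set Z2 := ∫ x, exp (-Φ2 x) ∂μ with hZ2
  have hZ1pos : 0 < Z1 := integral_exp_pos hexp1
  have hZ2pos : 0 < Z2 := integral_exp_pos hexp2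
  set I1 := ∫ x, Φ1 x ∂μ with hI1
  set I2 := ∫ x, Φ2 x ∂μ with hI2
  have hI1nn : 0 ≤ I1 := integral_nonneg h1n
  have hI2nn : 0 ≤ I2 := integral_nonneg h2n
  set D := ∫ x, |Φ1 x - Φ2 x| ∂μ with hD
  have hDint : Integrable (fun x => |Φ1 x - Φ2 x|) μ := (h1.sub h2).abs
  have hDnn : 0 ≤ D := integral_nonneg (fun x => abs_nonneg _)
  have hp1 : posterior μ Φ1 = μ.tilted (fun x => -Φ1 x) := rfl
  have hp2 : posterior μ Φ2 = μ.tilted (fun x => -Φ2 x) := rfl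
  set μ1 := μ.tilted (fun x => -Φ1 x) with hμ1def
  set μ2 := μ.tilted (fun x => -Φ2 x) with hμ2def
  set g := fun x => Φ2 x - Φ1 x with hg
  have hμ1 : μ2.tilted g = μ1 := by
    rw [hμ2def, tilted_tilted hexp2]
    congr 1
    funext x
    simp only [Pi.add_apply, hg]
    ring
  have hac : μ1 ≪ μ2 := hμ1 ▸ tilted_absolutelyContinuous μ2 g
  have hZg : ∫ x, exp (g x) ∂μ2 = Z1 / Z2 := by
    rw [hμ2def, integral_exp_tilted]
    congr 1
    apply integral_congr_ae
    filter_upwards with x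
    simp only [Pi.add_apply, hg]
    ring_nf
  have hexpg2 : Integrable (fun x => exp (g x)) μ2 := by
    rw [hμ2def, integrable_tilted_iff hexp2]
    have heq : (fun x => (exp (-Φ2 x) / Z2) * exp (g x)) = fun x => exp (-Φ1 x) / Z2 := by
      funext x
      rw [div_mul_eq_mul_div, ← Real.exp_add]
      congr 2
      simp only [hg]; ring
    rw [← hZ2, heq]
    exact hexp1.div_const _
  have hg1' : Integrable (fun x => (exp (-Φ1 x) / Z1) * g x) μ := by
    refine Integrable.mono' (((h1.abs.add h2.abs)).const_mul (1 / Z1)) ?_ ?_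
    · exact (hexp1.div_const Z1).1.mul (h2.1.sub h1.1)
    · filter_upwards with x
      rw [Real.norm_eq_abs, abs_mul]
      have hb1 : |exp (-Φ1 x) / Z1| ≤ 1 / Z1 := by
        rw [abs_of_pos (by positivity)]
        gcongr
        exact Real.exp_le_one_iff.mpr (neg_nonpos.mpr (h1n x))
      have hb2 : |g x| ≤ |Φ1 x| + |Φ2 x| := by
        simp only [hg]
        calc |Φ2 x - Φ1 x| ≤ |Φ2 x| + |Φ1 x| := abs_sub _ _
        _ = |Φ1 x| + |Φ2 x| := by ring
      calc |exp (-Φ1 x) / Z1| * |g x| ≤ (1 / Z1) * (|Φ1 x| + |Φ2 x|) :=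
        mul_le_mul hb1 hb2 (abs_nonneg _) (by positivity)
      _ = 1 / Z1 * (|Φ1 x| + |Φ2 x|) := rfl
  have hg1 : Integrable g μ1 := by
    rw [hμ1def, integrable_tilted_iff hexp1]
    exact hg1'.congr (by filter_upwards with x; rw [← hZ1])
  haveI : IsProbabilityMeasure μ1 := isProbabilityMeasure_tilted hexp1
  haveI : IsProbabilityMeasure μ2 := isProbabilityMeasure_tilted hexp2
  have hlog : (fun x => Real.log ((μ1.rnDeriv μ2 x)).toReal)
      =ᵐ[μ2] fun x => g x - Real.log (Z1 / Z2) := by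
    have := log_rnDeriv_tilted_left_self (μ := μ2) hexpg2
    rw [hμ1, hZg] at this
    exact this
  have hlog1 : (fun x => Real.log ((μ1.rnDeriv μ2 x)).toReal)
      =ᵐ[μ1] fun x => g x - Real.log (Z1 / Z2) := hlog.filter_mono hac.ae_le
  have hint_log : Integrable (fun x => Real.log ((μ1.rnDeriv μ2 x)).toReal) μ1 :=
    (hg1.sub (integrable_const _)).congr hlog1.symm
  rw [hp1, hp2, KLdiv, if_pos ⟨hac, hint_log⟩]
  apply ENNReal.ofReal_le_ofReal
  have hval : ∫ x, Real.log ((μ1.rnDeriv μ2 x)).toReal ∂μ1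
      = (∫ x, g x ∂μ1) - Real.log (Z1 / Z2) := by
    rw [integral_congr_ae hlog1, integral_sub hg1 (integrable_const _), integral_const]
    simp
  rw [hval]
  -- bound ∫ g dμ1
  have hgs : ∫ x, g x ∂μ1 ≤ (1 / Z1) * D := by
    have hgi : ∫ x, g x ∂μ1 = ∫ x, (exp (-Φ1 x) / Z1) • g x ∂μ := by
      rw [hμ1def, integral_tilted, ← hZ1]
    rw [hgi, hD]
    have : (1 / Z1) * ∫ x, |Φ1 x - Φ2 x| ∂μ = ∫ x, (1 / Z1) * |Φ1 x - Φ2 x| ∂μ := by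
      rw [MeasureTheory.integral_const_mul]
    rw [this]
    refine integral_mono hg1' (hDint.const_mul _) ?_
    intro x
    simp only [smul_eq_mul]
    have he : 0 ≤ exp (-Φ1 x) / Z1 := by positivity
    have he' : exp (-Φ1 x) / Z1 ≤ 1 / Z1 := by
      gcongr
      exact Real.exp_le_one_iff.mpr (neg_nonpos.mpr (h1n x))
    have hgabs : g x ≤ |Φ1 x - Φ2 x| := by
      simp only [hg]
      calc Φ2 x - Φ1 x ≤ |Φ2 x - Φ1 x| := le_abs_self _
      _ = |Φ1 x - Φ2 x| := abs_sub_comm _ _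
    calc exp (-Φ1 x) / Z1 * g x ≤ exp (-Φ1 x) / Z1 * |Φ1 x - Φ2 x| :=
      mul_le_mul_of_nonneg_left hgabs he
    _ ≤ 1 / Z1 * |Φ1 x - Φ2 x| := mul_le_mul_of_nonneg_right he' (abs_nonneg _)
  -- bound -log (Z1/Z2)
  have hlogZ : -Real.log (Z1 / Z2) ≤ (1 / Z1) * D := by
    have h1' : -Real.log (Z1 / Z2) = Real.log (Z2 / Z1) := by
      rw [← Real.log_inv]
      congr 1
      field_simp
    rw [h1']
    have h2' : Real.log (Z2 / Z1) ≤ Z2 / Z1 - 1 :=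
      Real.log_le_sub_one_of_pos (div_pos hZ2pos hZ1pos)
    have h3' : Z2 - Z1 ≤ D := by
      rw [hZ2, hZ1, hD, ← integral_sub hexp2 hexp1]
      refine integral_mono (hexp2.sub hexp1) hDint ?_
      intro x
      calc exp (-Φ2 x) - exp (-Φ1 x) ≤ |exp (-Φ1 x) - exp (-Φ2 x)| := by
            rw [abs_sub_comm]; exact le_abs_self _
      _ ≤ |Φ1 x - Φ2 x| := abs_exp_neg_sub_le (h1n x) (h2n x)
    calc Real.log (Z2 / Z1) ≤ Z2 / Z1 - 1 := h2'
    _ = (Z2 - Z1) / Z1 := by field_simp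
    _ ≤ D / Z1 := by gcongr
    _ = 1 / Z1 * D := by ring
  have hZinv : 1 / Z1 ≤ exp I1 := by
    rw [div_le_iff₀ hZ1pos]
    have := exp_neg_integral_le h1 h1n
    rw [← hI1, ← hZ1, Real.exp_neg] at this
    nlinarith [exp_pos I1, mul_le_mul_of_nonneg_left this (exp_pos I1).le,
      mul_inv_cancel₀ (exp_pos I1).ne']
  calc (∫ x, g x ∂μ1) - Real.log (Z1 / Z2) ≤ (1 / Z1) * D + (1 / Z1) * D := by
        linarith [hgs, hlogZ]
  _ = 2 * (1 / Z1) * D := by ring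
  _ ≤ 2 * exp I1 * D := by
      apply mul_le_mul_of_nonneg_right _ hDnn
      nlinarith
  _ ≤ 2 * exp (I1 + I2) * D := by
      apply mul_le_mul_of_nonneg_right _ hDnn
      have : exp I1 ≤ exp (I1 + I2) := Real.exp_le_exp.mpr (by linarith)
      linarith

end auxA

section matlemmas
variable {n : ℕ}

lemma sqrt_dot_eq_norm (v : Fin n → ℝ) :
    Real.sqrt (v ⬝ᵥ v) = ‖(WithLp.equiv 2 (Fin n → ℝ)).symm v‖ := by
  have h : v ⬝ᵥ v = ‖(WithLp.equiv 2 (Fin n → ℝ)).symm v‖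
      * ‖(WithLp.equiv 2 (Fin n → ℝ)).symm v‖ := by
    rw [← real_inner_self_eq_norm_mul_norm]
    rw [WithLp.equiv_symm_apply, EuclideanSpace.inner_toLp_toLp]
    simp
  rw [h, Real.sqrt_mul_self (norm_nonneg _)]

lemma dot_cs (u v : Fin n → ℝ) : |u ⬝ᵥ v| ≤ Real.sqrt (u ⬝ᵥ u) * Real.sqrt (v ⬝ᵥ v) := by
  rw [sqrt_dot_eq_norm, sqrt_dot_eq_norm]
  have h : u ⬝ᵥ v = (inner ℝ ((WithLp.equiv 2 (Fin n → ℝ)).symm u)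
      ((WithLp.equiv 2 (Fin n → ℝ)).symm v) : ℝ) := by
    rw [WithLp.equiv_symm_apply, EuclideanSpace.inner_toLp_toLp]; simp [dotProduct_comm]
  rw [h]
  exact abs_real_inner_le_norm _ _

lemma sqrt_dot_mulVec_le (A : Matrix (Fin n) (Fin n) ℝ) (v : Fin n → ℝ) :
    Real.sqrt ((A *ᵥ v) ⬝ᵥ (A *ᵥ v)) ≤ matOpNorm A * Real.sqrt (v ⬝ᵥ v) := by
  rw [sqrt_dot_eq_norm, sqrt_dot_eq_norm]
  have h : (WithLp.equiv 2 (Fin n → ℝ)).symm (A *ᵥ v)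
      = (LinearMap.toContinuousLinearMap (Matrix.toEuclideanLin A))
        ((WithLp.equiv 2 (Fin n → ℝ)).symm v) := by
    simp [Matrix.toEuclideanLin_apply]
  rw [h]
  exact (LinearMap.toContinuousLinearMap (Matrix.toEuclideanLin A)).le_opNorm _

lemma matOpNorm_nonneg (A : Matrix (Fin n) (Fin n) ℝ) : 0 ≤ matOpNorm A := norm_nonneg _

lemma posSemidefSqrt_eq_cfc {L : Matrix (Fin n) (Fin n) ℝ} (hL : L.PosSemidef) :
    posSemidefSqrt hL = cfc Real.sqrt L := by
  rw [hL.1.cfc_eq, IsHermitian.cfc, Unitary.conjStarAlgAut_apply]; rfl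

lemma posSemidefSqrt_mul_self {L : Matrix (Fin n) (Fin n) ℝ} (hL : L.PosSemidef) :
    posSemidefSqrt hL * posSemidefSqrt hL = L := by
  have hspec : ∀ x ∈ spectrum ℝ L, 0 ≤ x := by
    rw [hL.1.spectrum_real_eq_range_eigenvalues]; rintro _ ⟨i, rfl⟩; exact hL.eigenvalues_nonneg i
  rw [posSemidefSqrt_eq_cfc, ← cfc_mul Real.sqrt Real.sqrt L]
  refine (cfc_congr ?_).trans (cfc_id ℝ L hL.1.isSelfAdjoint)
  intro x hx
  exact Real.mul_self_sqrt (hspec x hx)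

lemma posSemidefSqrt_isHermitian {L : Matrix (Fin n) (Fin n) ℝ} (hL : L.PosSemidef) :
    (posSemidefSqrt hL).IsHermitian := by
  rw [posSemidefSqrt_eq_cfc]; exact cfc_predicate Real.sqrt L

lemma psd_dot_eq {L : Matrix (Fin n) (Fin n) ℝ} (hL : L.PosSemidef) (u v : Fin n → ℝ) :
    u ⬝ᵥ (L *ᵥ v) = (posSemidefSqrt hL *ᵥ u) ⬝ᵥ (posSemidefSqrt hL *ᵥ v) := by
  set R := posSemidefSqrt hL with hR
  have hsym : Rᵀ = R := by
    have h := posSemidefSqrt_isHermitian hL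
    ext i j
    have := congrFun (congrFun h i) j
    simpa [Matrix.conjTranspose_apply] using this
  conv_lhs => rw [← posSemidefSqrt_mul_self hL, ← hR]
  rw [← Matrix.mulVec_mulVec, Matrix.dotProduct_mulVec, ← Matrix.mulVec_transpose, hsym]

lemma posdef_sqrt_mul_inv_sqrt {M : Matrix (Fin n) (Fin n) ℝ} (hM : M.PosDef) :
    posSemidefSqrt hM.posSemidef * posSemidefSqrt hM.inv.posSemidef = 1 := by
  have hspec : ∀ x ∈ spectrum ℝ M, 0 < x := by
    rw [hM.1.spectrum_real_eq_range_eigenvalues]; rintro _ ⟨i, rfl⟩; exact hM.eigenvalues_pos i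
  have hne : spectrum ℝ M ⊆ {0}ᶜ := fun x hx => (hspec x hx).ne'
  have hinv : M⁻¹ = cfc (fun x : ℝ => x⁻¹) M := by
    have := cfc_inv (R := ℝ) (id : ℝ → ℝ) M (fun x hx => (hspec x hx).ne')
      (ha := hM.1.isSelfAdjoint)
    rw [cfc_id ℝ M hM.1.isSelfAdjoint] at this
    rw [nonsing_inv_eq_ringInverse, ← this]; rfl
  rw [posSemidefSqrt_eq_cfc, posSemidefSqrt_eq_cfc, hinv,
    ← cfc_comp Real.sqrt (fun x : ℝ => x⁻¹) M hM.1.isSelfAdjoint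
      (hf := continuousOn_inv₀.mono hne),
    ← cfc_mul Real.sqrt _ M
      (hg := Real.continuous_sqrt.comp_continuousOn (continuousOn_inv₀.mono hne))]
  refine (cfc_congr ?_).trans (cfc_one ℝ M hM.1.isSelfAdjoint)
  intro x hx
  simp only [Pi.one_apply, Function.comp_apply, Real.sqrt_inv]
  exact mul_inv_cancel₀ (Real.sqrt_pos.mpr (hspec x hx)).ne'

lemma key_opnorm {Γ S : Matrix (Fin n) (Fin n) ℝ} (hΓ : Γ.PosDef) (hS : S.PosSemidef)
    (z : Fin n → ℝ) :
    Real.sqrt (z ⬝ᵥ (Γ⁻¹ *ᵥ z)) ≤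
      matOpNorm (posSemidefSqrt hΓ.inv.posSemidef * posSemidefSqrt (hΓ.add_posSemidef hS).posSemidef)
        * Real.sqrt (z ⬝ᵥ ((Γ + S)⁻¹ *ᵥ z)) := by
  set A := posSemidefSqrt hΓ.inv.posSemidef with hA
  set hT : (Γ + S).PosDef := hΓ.add_posSemidef hS with hTdef
  set R := posSemidefSqrt hT.posSemidef with hRdef
  set B := posSemidefSqrt hT.inv.posSemidef with hBdef
  have hz : A *ᵥ z = (A * R) *ᵥ (B *ᵥ z) := by
    have hRB : R *ᵥ (B *ᵥ z) = z := by
      rw [Matrix.mulVec_mulVec, posdef_sqrt_mul_inv_sqrt hT, Matrix.one_mulVec]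
    calc A *ᵥ z = A *ᵥ (R *ᵥ (B *ᵥ z)) := by rw [hRB]
    _ = (A * R) *ᵥ (B *ᵥ z) := by rw [Matrix.mulVec_mulVec]
  rw [psd_dot_eq hΓ.inv.posSemidef z z, ← hA, hz,
      psd_dot_eq hT.inv.posSemidef z z, ← hBdef]
  exact sqrt_dot_mulVec_le (A * R) (B *ᵥ z)


lemma cs_psd {L : Matrix (Fin n) (Fin n) ℝ} (hL : L.PosSemidef) (u v : Fin n → ℝ) :
    |u ⬝ᵥ (L *ᵥ v)| ≤ Real.sqrt (u ⬝ᵥ (L *ᵥ u)) * Real.sqrt (v ⬝ᵥ (L *ᵥ v)) := by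
  rw [psd_dot_eq hL u v, psd_dot_eq hL u u, psd_dot_eq hL v v]
  exact dot_cs _ _

lemma quad_expand {L : Matrix (Fin n) (Fin n) ℝ} (hL : L.PosSemidef) (z b : Fin n → ℝ) :
    (z + b) ⬝ᵥ (L *ᵥ (z + b)) - z ⬝ᵥ (L *ᵥ z) = ((z + b) + z) ⬝ᵥ (L *ᵥ b) := by
  have hsym : ∀ u v : Fin n → ℝ, u ⬝ᵥ (L *ᵥ v) = v ⬝ᵥ (L *ᵥ u) := by
    intro u v
    rw [psd_dot_eq hL u v, psd_dot_eq hL v u, dotProduct_comm]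
  simp only [Matrix.mulVec_add, add_dotProduct, dotProduct_add]
  linarith [hsym b z]

lemma continuous_quadform (M : Matrix (Fin n) (Fin n) ℝ) :
    Continuous fun v : Fin n → ℝ => v ⬝ᵥ (M *ᵥ v) := by
  simp only [dotProduct, Matrix.mulVec]
  refine continuous_finset_sum _ fun i _ => ?_
  refine ((continuous_apply i).mul ?_)
  exact continuous_finset_sum _ fun j _ => continuous_const.mul (continuous_apply j)

variable {α : Type*} {mα : MeasurableSpace α} {μ : Measure α}

lemma integrable_sqrt {f : α → ℝ} [IsFiniteMeasure μ] (hf : Integrable f μ)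
    (hn : ∀ x, 0 ≤ f x) : Integrable (fun x => Real.sqrt (f x)) μ := by
  refine Integrable.mono' ((integrable_const 1).add hf) ?_ ?_
  · exact Real.continuous_sqrt.comp_aestronglyMeasurable hf.1
  · filter_upwards with x
    simp only [Pi.add_apply, Real.norm_eq_abs, abs_of_nonneg (Real.sqrt_nonneg _)]
    nlinarith [Real.sq_sqrt (hn x), Real.sqrt_nonneg (f x)]

lemma integral_sqrt_le [IsProbabilityMeasure μ] {f : α → ℝ} (hf : Integrable f μ)
    (hn : ∀ x, 0 ≤ f x) :
    ∫ x, Real.sqrt (f x) ∂μ ≤ Real.sqrt (∫ x, f x ∂μ) := by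
  set c := ∫ x, f x ∂μ with hc
  have hcnn : 0 ≤ c := integral_nonneg hn
  rcases eq_or_lt_of_le hcnn with hc0 | hcpos
  · have hf0 : f =ᵐ[μ] 0 := (integral_eq_zero_iff_of_nonneg hn hf).mp hc0.symm
    have : ∫ x, Real.sqrt (f x) ∂μ = 0 := by
      rw [integral_eq_zero_iff_of_nonneg (fun x => Real.sqrt_nonneg _) (integrable_sqrt hf hn)]
      filter_upwards [hf0] with x hx
      simp [hx]
    rw [this]
    exact Real.sqrt_nonneg _
  · have key : ∀ x, Real.sqrt (f x) ≤ Real.sqrt c + (f x - c) / (2 * Real.sqrt c) := by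
      intro x
      have hs := Real.sq_sqrt (hn x)
      have hr := Real.sq_sqrt hcnn
      have hrpos : 0 < Real.sqrt c := Real.sqrt_pos.mpr hcpos
      have h2 : Real.sqrt (f x) - Real.sqrt c ≤ (f x - c) / (2 * Real.sqrt c) := by
        rw [le_div_iff₀ (by positivity)]
        nlinarith [sq_nonneg (Real.sqrt (f x) - Real.sqrt c), Real.sqrt_nonneg (f x)]
      linarith
    have hint2 : Integrable (fun x => (f x - c) / (2 * Real.sqrt c)) μ :=
      (hf.sub (integrable_const c)).div_const _
    have := integral_mono (integrable_sqrt hf hn)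
      ((integrable_const (Real.sqrt c)).add hint2) key
    calc ∫ x, Real.sqrt (f x) ∂μ
        ≤ ∫ x, (Real.sqrt c + (f x - c) / (2 * Real.sqrt c)) ∂μ := this
    _ = Real.sqrt c := by
        rw [integral_add (integrable_const _) hint2,
          integral_const, integral_div, integral_sub hf (integrable_const _), integral_const]
        simp [← hc]

end matlemmas

set_option maxHeartbeats 1000000 in
theorem stmt8 {X U : Type*} [MeasurableSpace X] [NormedAddCommGroup U] [NormedSpace ℝ U]
    [CompleteSpace U] [MeasurableSpace U] [BorelSpace U]
    (μ : Measure X) [IsProbabilityMeasure μ] {n : ℕ}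
    (Mappr : X → U) (hMappr : Measurable Mappr)
    (O : U →L[ℝ] (Fin n → ℝ)) (y : Fin n → ℝ) (mε : U)
    (Γ : Matrix (Fin n) (Fin n) ℝ) (hΓ : Γ.PosDef)
    (S : Matrix (Fin n) (Fin n) ℝ) (hS : S.PosSemidef)
    (Ce : ℝ)
    (hCe : Ce = matOpNorm (posSemidefSqrt hΓ.inv.posSemidef * posSemidefSqrt (hΓ.add_posSemidef hS).posSemidef))
    (Φappr Φenh : X → ℝ)
    (hΦappr : Φappr = fun θ => (1/2) * ((y - O (Mappr θ)) ⬝ᵥ (Γ⁻¹ *ᵥ (y - O (Mappr θ)))))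
    (hΦenh : Φenh = fun θ => (1/2) *
      ((y - O (Mappr θ) - O mε) ⬝ᵥ ((Γ + S)⁻¹ *ᵥ (y - O (Mappr θ) - O mε))))
    (hia : Integrable Φappr μ) (hie : Integrable Φenh μ) :
    max (KLdiv (posterior μ Φappr) (posterior μ Φenh))
        (KLdiv (posterior μ Φenh) (posterior μ Φappr)) ≤
      ENNReal.ofReal
        ((Real.exp (2 * (∫ θ, |Φappr θ| ∂μ) + 2 * ∫ θ, |Φenh θ| ∂μ) *
            max (Real.sqrt 2 *
              (Real.sqrt (∫ θ, |Φappr θ| ∂μ) + Ce * Real.sqrt (∫ θ, |Φenh θ| ∂μ))) 1) *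
          (Real.sqrt ((O mε) ⬝ᵥ (Γ⁻¹ *ᵥ (O mε))) +
            ∫ θ, |((y - O (Mappr θ) - O mε) ⬝ᵥ (Γ⁻¹ *ᵥ (y - O (Mappr θ) - O mε))) -
              ((y - O (Mappr θ) - O mε) ⬝ᵥ ((Γ + S)⁻¹ *ᵥ (y - O (Mappr θ) - O mε)))| ∂μ)) := by
  have hGpsd : (Γ⁻¹).PosSemidef := hΓ.inv.posSemidef
  have hTpd : (Γ + S).PosDef := hΓ.add_posSemidef hS
  have hHpsd : ((Γ + S)⁻¹).PosSemidef := hTpd.inv.posSemidef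
  -- nonnegativity of the misfits
  have h1n : ∀ θ, 0 ≤ Φappr θ := by
    intro θ
    rw [hΦappr]
    have := hGpsd.dotProduct_mulVec_nonneg (y - O (Mappr θ))
    simp only [star_trivial] at this
    positivity
  have h2n : ∀ θ, 0 ≤ Φenh θ := by
    intro θ
    rw [hΦenh]
    have := hHpsd.dotProduct_mulVec_nonneg (y - O (Mappr θ) - O mε)
    simp only [star_trivial] at this
    positivity
  -- rewrite the absolute-value integrals
  have habs1 : ∫ θ, |Φappr θ| ∂μ = ∫ θ, Φappr θ ∂μ :=
    integral_congr_ae (Filter.Eventually.of_forall fun θ => abs_of_nonneg (h1n θ))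
  have habs2 : ∫ θ, |Φenh θ| ∂μ = ∫ θ, Φenh θ ∂μ :=
    integral_congr_ae (Filter.Eventually.of_forall fun θ => abs_of_nonneg (h2n θ))
  rw [habs1, habs2]
  set I1 := ∫ θ, Φappr θ ∂μ with hI1def
  set I2 := ∫ θ, Φenh θ ∂μ with hI2def
  have hI1nn : 0 ≤ I1 := integral_nonneg h1n
  have hI2nn : 0 ≤ I2 := integral_nonneg h2n
  set K := Real.sqrt ((O mε) ⬝ᵥ (Γ⁻¹ *ᵥ (O mε))) with hKdef
  set Q := ∫ θ, |((y - O (Mappr θ) - O mε) ⬝ᵥ (Γ⁻¹ *ᵥ (y - O (Mappr θ) - O mε))) -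
      ((y - O (Mappr θ) - O mε) ⬝ᵥ ((Γ + S)⁻¹ *ᵥ (y - O (Mappr θ) - O mε)))| ∂μ with hQdef
  have hKnn : 0 ≤ K := Real.sqrt_nonneg _
  have hQnn : 0 ≤ Q := integral_nonneg fun θ => abs_nonneg _
  have hCenn : 0 ≤ Ce := by rw [hCe]; exact matOpNorm_nonneg _
  set D := ∫ θ, |Φappr θ - Φenh θ| ∂μ with hDdef
  have hDnn : 0 ≤ D := integral_nonneg fun θ => abs_nonneg _
  -- KL bounds from the abstract lemma
  have hkl1 := kl_posterior_le (μ := μ) hia hie h1n h2n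
  have hkl2 := kl_posterior_le (μ := μ) hie hia h2n h1n
  have habsD : ∫ x, |Φenh x - Φappr x| ∂μ = D := by
    rw [hDdef]
    exact integral_congr_ae (Filter.Eventually.of_forall fun θ => abs_sub_comm _ _)
  rw [habsD] at hkl2
  rw [← hI1def, ← hI2def] at hkl1 hkl2
  rw [add_comm I2 I1] at hkl2
  refine le_trans (max_le hkl1 hkl2) (ENNReal.ofReal_le_ofReal ?_)
  -- now a purely real inequality
  -- pointwise bound on the misfit difference
  have h2a : ∀ θ, 2 * Φappr θ = (y - O (Mappr θ)) ⬝ᵥ (Γ⁻¹ *ᵥ (y - O (Mappr θ))) := by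
    intro θ; rw [hΦappr]; ring
  have h2e : ∀ θ, 2 * Φenh θ =
      (y - O (Mappr θ) - O mε) ⬝ᵥ ((Γ + S)⁻¹ *ᵥ (y - O (Mappr θ) - O mε)) := by
    intro θ; rw [hΦenh]; ring
  have hpt : ∀ θ, |Φappr θ - Φenh θ| ≤
      1/2 * K * Real.sqrt (2 * Φappr θ) + 1/2 * (Ce * K) * Real.sqrt (2 * Φenh θ) +
      1/2 * |((y - O (Mappr θ) - O mε) ⬝ᵥ (Γ⁻¹ *ᵥ (y - O (Mappr θ) - O mε))) -
        ((y - O (Mappr θ) - O mε) ⬝ᵥ ((Γ + S)⁻¹ *ᵥ (y - O (Mappr θ) - O mε)))| := by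
    intro θ
    set zv := y - O (Mappr θ) - O mε with hzv
    set wv := y - O (Mappr θ) with hwv
    have hzwb : wv = zv + O mε := by rw [hzv, hwv]; abel
    have hid : Φappr θ - Φenh θ = 1/2 * ((wv + zv) ⬝ᵥ (Γ⁻¹ *ᵥ (O mε))) +
        1/2 * (zv ⬝ᵥ (Γ⁻¹ *ᵥ zv) - zv ⬝ᵥ ((Γ + S)⁻¹ *ᵥ zv)) := by
      rw [hΦappr, hΦenh]
      simp only [← hzv, ← hwv]
      have key : (zv + O mε) ⬝ᵥ (Γ⁻¹ *ᵥ (zv + O mε)) - zv ⬝ᵥ (Γ⁻¹ *ᵥ zv)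
          = ((zv + O mε) + zv) ⬝ᵥ (Γ⁻¹ *ᵥ (O mε)) := quad_expand hGpsd zv (O mε)
      rw [hzwb]
      linarith [key]
    have hcs1 : |wv ⬝ᵥ (Γ⁻¹ *ᵥ (O mε))| ≤ Real.sqrt (wv ⬝ᵥ (Γ⁻¹ *ᵥ wv)) * K := by
      rw [hKdef]; exact cs_psd hGpsd wv (O mε)
    have hcs2 : |zv ⬝ᵥ (Γ⁻¹ *ᵥ (O mε))| ≤ Real.sqrt (zv ⬝ᵥ (Γ⁻¹ *ᵥ zv)) * K := by
      rw [hKdef]; exact cs_psd hGpsd zv (O mε)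
    have hop : Real.sqrt (zv ⬝ᵥ (Γ⁻¹ *ᵥ zv)) ≤ Ce * Real.sqrt (zv ⬝ᵥ ((Γ + S)⁻¹ *ᵥ zv)) := by
      rw [hCe]; exact key_opnorm hΓ hS zv
    have hsa : Real.sqrt (wv ⬝ᵥ (Γ⁻¹ *ᵥ wv)) = Real.sqrt (2 * Φappr θ) := by rw [h2a θ]
    have hse : Real.sqrt (zv ⬝ᵥ ((Γ + S)⁻¹ *ᵥ zv)) = Real.sqrt (2 * Φenh θ) := by rw [h2e θ]
    have hadd : |(wv + zv) ⬝ᵥ (Γ⁻¹ *ᵥ (O mε))| ≤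
        |wv ⬝ᵥ (Γ⁻¹ *ᵥ (O mε))| + |zv ⬝ᵥ (Γ⁻¹ *ᵥ (O mε))| := by
      rw [add_dotProduct]; exact abs_add_le _ _
    calc |Φappr θ - Φenh θ|
        ≤ 1/2 * |(wv + zv) ⬝ᵥ (Γ⁻¹ *ᵥ (O mε))| +
          1/2 * |zv ⬝ᵥ (Γ⁻¹ *ᵥ zv) - zv ⬝ᵥ ((Γ + S)⁻¹ *ᵥ zv)| := by
          rw [hid]
          refine le_trans (abs_add_le _ _) ?_
          rw [abs_mul, abs_mul]
          simp only [show |(1:ℝ)/2| = 1/2 from abs_of_pos (by norm_num)]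
          exact le_refl _
    _ ≤ 1/2 * K * Real.sqrt (2 * Φappr θ) + 1/2 * (Ce * K) * Real.sqrt (2 * Φenh θ) +
        1/2 * |zv ⬝ᵥ (Γ⁻¹ *ᵥ zv) - zv ⬝ᵥ ((Γ + S)⁻¹ *ᵥ zv)| := by
          have hK2 : Real.sqrt (zv ⬝ᵥ (Γ⁻¹ *ᵥ zv)) * K ≤
              Ce * Real.sqrt (2 * Φenh θ) * K := by
            rw [← hse]
            exact mul_le_mul_of_nonneg_right hop hKnn
          nlinarith [hcs1, hcs2, hadd, hsa, hK2, abs_nonneg (zv ⬝ᵥ (Γ⁻¹ *ᵥ zv) - zv ⬝ᵥ ((Γ + S)⁻¹ *ᵥ zv))]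

  -- integrability facts
  have hsqa : Integrable (fun θ => Real.sqrt (2 * Φappr θ)) μ :=
    integrable_sqrt (hia.const_mul 2) (fun θ => mul_nonneg (by norm_num) (h1n θ))
  have hsqe : Integrable (fun θ => Real.sqrt (2 * Φenh θ)) μ :=
    integrable_sqrt (hie.const_mul 2) (fun θ => mul_nonneg (by norm_num) (h2n θ))
  have hzGz_meas : AEStronglyMeasurable
      (fun θ => (y - O (Mappr θ) - O mε) ⬝ᵥ (Γ⁻¹ *ᵥ (y - O (Mappr θ) - O mε))) μ := by
    have hcont : Continuous (fun u : U => (y - O u - O mε) ⬝ᵥ (Γ⁻¹ *ᵥ (y - O u - O mε))) :=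
      (continuous_quadform Γ⁻¹).comp ((continuous_const.sub O.continuous).sub continuous_const)
    exact (hcont.measurable.comp hMappr).aestronglyMeasurable
  have hzGz_int : Integrable
      (fun θ => (y - O (Mappr θ) - O mε) ⬝ᵥ (Γ⁻¹ *ᵥ (y - O (Mappr θ) - O mε))) μ := by
    refine Integrable.mono' (hie.const_mul (2 * Ce ^ 2)) hzGz_meas ?_
    filter_upwards with θ
    have hnn : 0 ≤ (y - O (Mappr θ) - O mε) ⬝ᵥ (Γ⁻¹ *ᵥ (y - O (Mappr θ) - O mε)) := by
      have := hGpsd.dotProduct_mulVec_nonneg (y - O (Mappr θ) - O mε); simpa using this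
    have hnn2 : 0 ≤ (y - O (Mappr θ) - O mε) ⬝ᵥ ((Γ + S)⁻¹ *ᵥ (y - O (Mappr θ) - O mε)) := by
      have := hHpsd.dotProduct_mulVec_nonneg (y - O (Mappr θ) - O mε); simpa using this
    have hop := key_opnorm hΓ hS (y - O (Mappr θ) - O mε)
    rw [← hCe] at hop
    rw [Real.norm_eq_abs, abs_of_nonneg hnn]
    have hs1 := Real.sq_sqrt hnn
    have hs2 := Real.sq_sqrt hnn2
    have h2e' := h2e θ
    nlinarith [mul_self_le_mul_self (Real.sqrt_nonneg
        ((y - O (Mappr θ) - O mε) ⬝ᵥ (Γ⁻¹ *ᵥ (y - O (Mappr θ) - O mε)))) hop,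
      Real.sqrt_nonneg ((y - O (Mappr θ) - O mε) ⬝ᵥ ((Γ + S)⁻¹ *ᵥ (y - O (Mappr θ) - O mε))),
      hCenn]
  have hzHz_int : Integrable
      (fun θ => (y - O (Mappr θ) - O mε) ⬝ᵥ ((Γ + S)⁻¹ *ᵥ (y - O (Mappr θ) - O mε))) μ := by
    have heq : (fun θ => (y - O (Mappr θ) - O mε) ⬝ᵥ ((Γ + S)⁻¹ *ᵥ (y - O (Mappr θ) - O mε)))
        = fun θ => 2 * Φenh θ := by funext θ; rw [← h2e θ]
    rw [heq]; exact hie.const_mul 2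
  have hqabs_int : Integrable (fun θ =>
      |((y - O (Mappr θ) - O mε) ⬝ᵥ (Γ⁻¹ *ᵥ (y - O (Mappr θ) - O mε))) -
        ((y - O (Mappr θ) - O mε) ⬝ᵥ ((Γ + S)⁻¹ *ᵥ (y - O (Mappr θ) - O mε)))|) μ :=
    (hzGz_int.sub hzHz_int).abs
  set SA := ∫ θ, Real.sqrt (2 * Φappr θ) ∂μ with hSAdef
  set SE := ∫ θ, Real.sqrt (2 * Φenh θ) ∂μ with hSEdef
  have hfa : Integrable (fun θ => 1/2 * K * Real.sqrt (2 * Φappr θ)) μ := hsqa.const_mul _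
  have hfe : Integrable (fun θ => 1/2 * (Ce * K) * Real.sqrt (2 * Φenh θ)) μ := hsqe.const_mul _
  have hfq : Integrable (fun θ => 1/2 *
      |((y - O (Mappr θ) - O mε) ⬝ᵥ (Γ⁻¹ *ᵥ (y - O (Mappr θ) - O mε))) -
        ((y - O (Mappr θ) - O mε) ⬝ᵥ ((Γ + S)⁻¹ *ᵥ (y - O (Mappr θ) - O mε)))|) μ :=
    hqabs_int.const_mul _
  have hfae : Integrable (fun θ => 1/2 * K * Real.sqrt (2 * Φappr θ)
      + 1/2 * (Ce * K) * Real.sqrt (2 * Φenh θ)) μ := hfa.add hfe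
  have hDle : D ≤ 1/2 * K * SA + 1/2 * (Ce * K) * SE + 1/2 * Q := by
    rw [hDdef, hQdef, hSAdef, hSEdef]
    calc ∫ θ, |Φappr θ - Φenh θ| ∂μ
        ≤ ∫ θ, (1/2 * K * Real.sqrt (2 * Φappr θ) + 1/2 * (Ce * K) * Real.sqrt (2 * Φenh θ) +
            1/2 * |((y - O (Mappr θ) - O mε) ⬝ᵥ (Γ⁻¹ *ᵥ (y - O (Mappr θ) - O mε))) -
              ((y - O (Mappr θ) - O mε) ⬝ᵥ ((Γ + S)⁻¹ *ᵥ (y - O (Mappr θ) - O mε)))|) ∂μ :=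
          integral_mono (hia.sub hie).abs (hfae.add hfq) hpt
    _ = _ := by
        rw [integral_add hfae hfq, integral_add hfa hfe,
          MeasureTheory.integral_const_mul, MeasureTheory.integral_const_mul,
          MeasureTheory.integral_const_mul]
  have hSA : SA ≤ Real.sqrt 2 * Real.sqrt I1 := by
    rw [hSAdef]
    refine le_trans (integral_sqrt_le (hia.const_mul 2)
      (fun θ => mul_nonneg (by norm_num) (h1n θ))) ?_
    rw [MeasureTheory.integral_const_mul, Real.sqrt_mul (by norm_num : (0:ℝ) ≤ 2)]
  have hSE : SE ≤ Real.sqrt 2 * Real.sqrt I2 := by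
    rw [hSEdef]
    refine le_trans (integral_sqrt_le (hie.const_mul 2)
      (fun θ => mul_nonneg (by norm_num) (h2n θ))) ?_
    rw [MeasureTheory.integral_const_mul, Real.sqrt_mul (by norm_num : (0:ℝ) ≤ 2)]
  set Mx := max (Real.sqrt 2 * (Real.sqrt I1 + Ce * Real.sqrt I2)) 1 with hMxdef
  have hMx0 : (0:ℝ) ≤ Mx := le_trans zero_le_one (le_max_right _ _)
  calc 2 * rexp (I1 + I2) * D
      ≤ 2 * rexp (I1 + I2) * (1/2 * K * SA + 1/2 * (Ce * K) * SE + 1/2 * Q) :=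
        mul_le_mul_of_nonneg_left hDle (by positivity)
  _ = rexp (I1 + I2) * (K * SA + (Ce * K) * SE + Q) := by ring
  _ ≤ rexp (I1 + I2) * (K * (Real.sqrt 2 * Real.sqrt I1) +
        (Ce * K) * (Real.sqrt 2 * Real.sqrt I2) + Q) := by
      refine mul_le_mul_of_nonneg_left ?_ (Real.exp_pos _).le
      have ha := mul_le_mul_of_nonneg_left hSA hKnn
      have hb := mul_le_mul_of_nonneg_left hSE (mul_nonneg hCenn hKnn)
      linarith
  _ = rexp (I1 + I2) * (K * (Real.sqrt 2 * (Real.sqrt I1 + Ce * Real.sqrt I2)) + Q) := by ring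
  _ ≤ rexp (I1 + I2) * (K * Mx + Q * Mx) := by
      refine mul_le_mul_of_nonneg_left ?_ (Real.exp_pos _).le
      have hx1 := le_max_left (Real.sqrt 2 * (Real.sqrt I1 + Ce * Real.sqrt I2)) 1
      have hx2 := le_max_right (Real.sqrt 2 * (Real.sqrt I1 + Ce * Real.sqrt I2)) 1
      rw [← hMxdef] at hx1 hx2
      nlinarith [hKnn, hQnn]
  _ = rexp (I1 + I2) * Mx * (K + Q) := by ring
  _ ≤ rexp (2 * I1 + 2 * I2) * Mx * (K + Q) := by
      have hx : rexp (I1 + I2) ≤ rexp (2 * I1 + 2 * I2) := Real.exp_le_exp.mpr (by linarith)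
      have hKQ : (0:ℝ) ≤ K + Q := by linarith
      calc rexp (I1 + I2) * Mx * (K + Q) = rexp (I1 + I2) * (Mx * (K + Q)) := by ring
      _ ≤ rexp (2 * I1 + 2 * I2) * (Mx * (K + Q)) :=
          mul_le_mul_of_nonneg_right hx (mul_nonneg hMx0 hKQ)
      _ = rexp (2 * I1 + 2 * I2) * Mx * (K + Q) := by ring
end
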